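/- For any LE-ALC ABox A, any model M = (F, ·^M) of A can be extended to a model M' = (F', ·^{M'}) with F' = (A', X', I', {R_□'}, {R_◇'}), A ⊆ A' and X ⊆ X', such that: (1) for every concept C there exist a_C ∈ A' and x_C ∈ X' with C^{M'} = (I'^(0)[x_C^{M'}], I'^(1)[a_C^{M'}]), a_C^{M'} in the extent of C^{M'} and x_C^{M'} in the intent of C^{M'}; (2) for every individual b in A there exist ◇b and ◆b in A' with I'^(1)[◆b] = R_□'^(1)[b^{M'}] and I'^(1)[◇b] = R_◇'^(0)[b^{M'}]; (3) for every individual y in X there exist □y and ■y in X' with I'^(0)[■y] = R_◇'^(1)[y^{M'}] and I'^(0)[□y] = R_□'^(0)[y^{M'}]; (4) for any concept C, the extent of C^M equals the extent of C^{M'} intersected with A, and the intent of C^M equals the intent of C^{M'} intersected with X. -/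

import Mathlib

/-!
Common formal infrastructure for the description logic LE-ALC:
syntax of concepts, individual names, ABox terms, the tableaux expansion
rules and completion, and the polarity-based (enriched formal context)
semantics.
-/

namespace LEALC

/-- LE-ALC concepts: `C ::= D | C₁ ∧ C₂ | C₁ ∨ C₂ | [R_□]C | ⟨R_◇⟩C`. -/
inductive Cpt : Type
  | atom : ℕ → Cpt
  | meet : Cpt → Cpt → Cpt
  | join : Cpt → Cpt → Cpt
  | box  : Cpt → Cpt
  | dia  : Cpt → Cpt
  deriving DecidableEq

/-- Object individual names: ordinary names from `OBJ`, classifying objects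
`a_C`, and the prefixed names `◇b`, `◆b` generated by the tableaux. -/
inductive ObName : Type
  | base : ℕ → ObName
  | cls  : Cpt → ObName
  | dia  : ObName → ObName
  | bdia : ObName → ObName
  deriving DecidableEq

/-- Feature individual names: ordinary names from `FEAT`, classifying features
`x_C`, and the prefixed names `□y`, `■y` generated by the tableaux. -/
inductive FtName : Type
  | base : ℕ → FtName
  | cls  : Cpt → FtName
  | box  : FtName → FtName
  | bbox : FtName → FtName
  deriving DecidableEq

/-- `◇b`, with the identification `◇a_C = a_{◇C}`. -/
def ObName.diaS : ObName → ObName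
  | .cls C => .cls (.dia C)
  | b => .dia b

/-- `□y`, with the identification `□x_C = x_{□C}`. -/
def FtName.boxS : FtName → FtName
  | .cls C => .cls (.box C)
  | y => .box y

/-- Positive (unnegated) ABox terms:
`a I x`, `a R_□ x`, `x R_◇ a`, `a : C`, `x :: C`. -/
inductive PTerm : Type
  | rI   : ObName → FtName → PTerm
  | rbox : ObName → FtName → PTerm
  | rdia : FtName → ObName → PTerm
  | mem  : ObName → Cpt → PTerm
  | fmem : FtName → Cpt → PTerm
  deriving DecidableEq

/-- ABox terms: a positive term or its negation. -/
inductive Term : Type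
  | pos : PTerm → Term
  | neg : PTerm → Term
  deriving DecidableEq

/-- The relational terms are `a I x`, `a R_□ x` and `x R_◇ a`. -/
def PTerm.IsRelational : PTerm → Prop
  | .rI _ _ => True
  | .rbox _ _ => True
  | .rdia _ _ => True
  | .mem _ _ => False
  | .fmem _ _ => False

/-- Subformulas (subconcepts) of a concept. -/
def Cpt.subs : Cpt → Finset Cpt
  | .atom n => {Cpt.atom n}
  | .meet C₁ C₂ => insert (Cpt.meet C₁ C₂) (C₁.subs ∪ C₂.subs)
  | .join C₁ C₂ => insert (Cpt.join C₁ C₂) (C₁.subs ∪ C₂.subs)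
  | .box C => insert (Cpt.box C) C.subs
  | .dia C => insert (Cpt.dia C) C.subs

/-- The concepts occurring in a term (subformulas of the concept of a
(possibly negated) membership assertion). -/
def Term.cpts : Term → Finset Cpt
  | .pos (.mem _ C) => C.subs
  | .pos (.fmem _ C) => C.subs
  | .neg (.mem _ C) => C.subs
  | .neg (.fmem _ C) => C.subs
  | _ => ∅

/-- The concept `C` occurs in the set of terms `A`. -/
def Occurs (C : Cpt) (A : Set Term) : Prop := ∃ t ∈ A, C ∈ t.cpts

def PTerm.objs : PTerm → List ObName
  | .rI b _ => [b]
  | .rbox b _ => [b]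
  | .rdia _ b => [b]
  | .mem b _ => [b]
  | .fmem _ _ => []

def PTerm.feats : PTerm → List FtName
  | .rI _ y => [y]
  | .rbox _ y => [y]
  | .rdia y _ => [y]
  | .mem _ _ => []
  | .fmem y _ => [y]

def Term.objs : Term → List ObName
  | .pos t => t.objs
  | .neg t => t.objs

def Term.feats : Term → List FtName
  | .pos t => t.feats
  | .neg t => t.feats

/-- The object name `b` occurs in the set of terms `S`. -/
def ObOccurs (b : ObName) (S : Set Term) : Prop := ∃ t ∈ S, b ∈ t.objs

/-- The feature name `y` occurs in the set of terms `S`. -/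
def FtOccurs (y : FtName) (S : Set Term) : Prop := ∃ t ∈ S, y ∈ t.feats

def ObName.IsBase (b : ObName) : Prop := ∃ n, b = ObName.base n
def FtName.IsBase (y : FtName) : Prop := ∃ n, y = FtName.base n

/-- A term all of whose individual names are ordinary (non-generated) names. -/
def Term.Plain (t : Term) : Prop :=
  (∀ b ∈ t.objs, b.IsBase) ∧ (∀ y ∈ t.feats, y.IsBase)

/-- An ABox is a set of terms over the ordinary individual names `OBJ`/`FEAT`
(the generated names `a_C`, `x_C`, `◇b`, `◆b`, `□y`, `■y` are fresh). -/
def ABoxWF (A : Set Term) : Prop := ∀ t ∈ A, t.Plain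

def Cpt.csize : Cpt → ℕ
  | .atom _ => 1
  | .meet C₁ C₂ => C₁.csize + C₂.csize + 1
  | .join C₁ C₂ => C₁.csize + C₂.csize + 1
  | .box C => C.csize + 1
  | .dia C => C.csize + 1

def PTerm.psize : PTerm → ℕ
  | .rI _ _ => 1
  | .rbox _ _ => 1
  | .rdia _ _ => 1
  | .mem _ C => C.csize + 1
  | .fmem _ C => C.csize + 1

def Term.tsize : Term → ℕ
  | .pos t => t.psize + 1
  | .neg t => t.psize + 2

/-- The size `|A|` of an ABox. -/
def aboxSize (A : Finset Term) : ℕ := A.sum Term.tsize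

/-- Box-depth of a concept. -/
def Cpt.bd : Cpt → ℕ
  | .atom _ => 0
  | .meet C₁ C₂ => max C₁.bd C₂.bd
  | .join C₁ C₂ => max C₁.bd C₂.bd
  | .box C => C.bd + 1
  | .dia C => C.bd

/-- Diamond-depth of a concept. -/
def Cpt.dd : Cpt → ℕ
  | .atom _ => 0
  | .meet C₁ C₂ => max C₁.dd C₂.dd
  | .join C₁ C₂ => max C₁.dd C₂.dd
  | .box C => C.dd
  | .dia C => C.dd + 1

/-- Box-depth of an object name (names in the input ABox have depth 0,
prefixing changes the depth, classifying names inherit depths from their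
concept). -/
def ObName.bd : ObName → ℤ
  | .base _ => 0
  | .cls C => -(C.bd : ℤ)
  | .dia b => b.bd
  | .bdia b => b.bd + 1

/-- Diamond-depth of an object name. -/
def ObName.dd : ObName → ℤ
  | .base _ => 0
  | .cls C => -(C.dd : ℤ)
  | .dia b => b.dd + 1
  | .bdia b => b.dd

/-- Box-depth of a feature name. -/
def FtName.bd : FtName → ℤ
  | .base _ => 0
  | .cls C => -(C.bd : ℤ)
  | .box y => y.bd + 1
  | .bbox y => y.bd

/-- Diamond-depth of a feature name. -/
def FtName.dd : FtName → ℤ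
  | .base _ => 0
  | .cls C => -(C.dd : ℤ)
  | .box y => y.dd
  | .bbox y => y.dd + 1

/-- All concepts occurring in an ABox. -/
def aboxCpts (A : Finset Term) : Finset Cpt := A.biUnion Term.cpts

/-- `□_D(A)`: maximal box-depth of a concept occurring in `A`. -/
def aboxBd (A : Finset Term) : ℕ := (aboxCpts A).sup Cpt.bd

/-- `◇_D(A)`: maximal diamond-depth of a concept occurring in `A`. -/
def aboxDd (A : Finset Term) : ℕ := (aboxCpts A).sup Cpt.dd

/-- One-step derivability: `Deriv E A S t` holds iff the term `t` can be
added by applying one of the LE-ALC tableaux expansion rules (or the extra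
rule `E`) to the current set of terms `S`, `A` being the input ABox (used
for the side conditions of the creation and inverse rules). -/
inductive Deriv (E : Term → Term → Prop) (A S : Set Term) : Term → Prop
  /-- creation rule -/
  | create_a {C : Cpt} : Occurs C A → Deriv E A S (.pos (.mem (.cls C) C))
  | create_x {C : Cpt} : Occurs C A → Deriv E A S (.pos (.fmem (.cls C) C))
  /-- basic rule -/
  | basic {b y C} : Term.pos (.mem b C) ∈ S → Term.pos (.fmem y C) ∈ S →
      Deriv E A S (.pos (.rI b y))
  /-- rules for the logical connectives -/
  | andA_l {b C₁ C₂} : Term.pos (.mem b (.meet C₁ C₂)) ∈ S → Deriv E A S (.pos (.mem b C₁))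
  | andA_r {b C₁ C₂} : Term.pos (.mem b (.meet C₁ C₂)) ∈ S → Deriv E A S (.pos (.mem b C₂))
  | orX_l {y C₁ C₂} : Term.pos (.fmem y (.join C₁ C₂)) ∈ S → Deriv E A S (.pos (.fmem y C₁))
  | orX_r {y C₁ C₂} : Term.pos (.fmem y (.join C₁ C₂)) ∈ S → Deriv E A S (.pos (.fmem y C₂))
  | boxR {b y C} : Term.pos (.mem b (.box C)) ∈ S → Term.pos (.fmem y C) ∈ S →
      Deriv E A S (.pos (.rbox b y))
  | diaR {b y C} : Term.pos (.fmem y (.dia C)) ∈ S → Term.pos (.mem b C) ∈ S →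
      Deriv E A S (.pos (.rdia y b))
  /-- inverse rules for the connectives -/
  | andA_inv {b C₁ C₂} : Term.pos (.mem b C₁) ∈ S → Term.pos (.mem b C₂) ∈ S →
      Occurs (.meet C₁ C₂) A → Deriv E A S (.pos (.mem b (.meet C₁ C₂)))
  | orX_inv {y C₁ C₂} : Term.pos (.fmem y C₁) ∈ S → Term.pos (.fmem y C₂) ∈ S →
      Occurs (.join C₁ C₂) A → Deriv E A S (.pos (.fmem y (.join C₁ C₂)))
  /-- adjunction rules -/
  | adj_box_l {b y} : Term.pos (.rbox b y) ∈ S → Deriv E A S (.pos (.rI (.bdia b) y))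
  | adj_box_r {b y} : Term.pos (.rbox b y) ∈ S → Deriv E A S (.pos (.rI b (FtName.boxS y)))
  | adj_dia_l {b y} : Term.pos (.rdia y b) ∈ S → Deriv E A S (.pos (.rI (ObName.diaS b) y))
  | adj_dia_r {b y} : Term.pos (.rdia y b) ∈ S → Deriv E A S (.pos (.rI b (.bbox y)))
  /-- I-compatibility rules -/
  | icomp_box {b y} : Term.pos (.rI b (FtName.boxS y)) ∈ S → Deriv E A S (.pos (.rbox b y))
  | icomp_bbox {b y} : Term.pos (.rI b (.bbox y)) ∈ S → Deriv E A S (.pos (.rdia y b))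
  | icomp_dia {b y} : Term.pos (.rI (ObName.diaS b) y) ∈ S → Deriv E A S (.pos (.rdia y b))
  | icomp_bdia {b y} : Term.pos (.rI (.bdia b) y) ∈ S → Deriv E A S (.pos (.rbox b y))
  /-- basic rules for negative assertions -/
  | neg_b {b C} : Term.neg (.mem b C) ∈ S → Deriv E A S (.neg (.rI b (.cls C)))
  | neg_x {y C} : Term.neg (.fmem y C) ∈ S → Deriv E A S (.neg (.rI (.cls C) y))
  /-- appending rules -/
  | app_x {b C} : Term.pos (.rI b (.cls C)) ∈ S → Deriv E A S (.pos (.mem b C))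
  | app_a {y C} : Term.pos (.rI (.cls C) y) ∈ S → Deriv E A S (.pos (.fmem y C))
  /-- an additional expansion rule `E` -/
  | extra {t t'} : E t t' → t ∈ S → Deriv E A S t'

/-- `S` contains `A` and is closed under the expansion rules. -/
def RuleClosed (E : Term → Term → Prop) (A S : Set Term) : Prop :=
  A ⊆ S ∧ ∀ t, Deriv E A S t → t ∈ S

/-- The tableaux completion `Ā` of the ABox `A` (w.r.t. the LE-ALC expansion
rules together with the extra rule `E`): the least set of terms containing
`A` and closed under the rules. -/
def Compl (E : Term → Term → Prop) (A : Set Term) : Set Term :=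
  {t | ∀ S : Set Term, RuleClosed E A S → t ∈ S}

/-- No extra expansion rule: the plain LE-ALC tableaux algorithm. -/
def noExt : Term → Term → Prop := fun _ _ => False

/-- One expansion step of the tableaux algorithm: a rule is applied to the
current set `B` and adds a new term. -/
def Step (E : Term → Term → Prop) (A B B' : Set Term) : Prop :=
  ∃ t, Deriv E A B t ∧ t ∉ B ∧ B' = insert t B

/-- A clash: some relational term occurs together with its negation. -/
def HasClash (S : Set Term) : Prop :=
  ∃ β : PTerm, β.IsRelational ∧ Term.pos β ∈ S ∧ Term.neg β ∈ S

/-- The separation rule `SA(b,d)`: from `b I x` infer `d I x`. -/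
def ruleSA (b d : ObName) : Term → Term → Prop :=
  fun t t' => ∃ x : FtName, t = Term.pos (.rI b x) ∧ t' = Term.pos (.rI d x)

/-- The separation rule `SX(y,z)`: from `a I y` infer `a I z`. -/
def ruleSX (y z : FtName) : Term → Term → Prop :=
  fun t t' => ∃ a : ObName, t = Term.pos (.rI a y) ∧ t' = Term.pos (.rI a z)

/-- The rule `SA(R_□,R_◇,b)`: from `b R_□ y` infer `y R_◇ b`. -/
def ruleSAR (b : ObName) : Term → Term → Prop :=
  fun t t' => ∃ x : FtName, t = Term.pos (.rbox b x) ∧ t' = Term.pos (.rdia x b)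

/-- The rule `SX(R_◇,R_□,y)`: from `y R_◇ a` infer `a R_□ y`. -/
def ruleSXR (y : FtName) : Term → Term → Prop :=
  fun t t' => ∃ a : ObName, t = Term.pos (.rdia y a) ∧ t' = Term.pos (.rbox a y)

/-! ## Semantics: enriched formal contexts -/

/-- `I^{(1)}[B]` -/
def gup {O F : Type} (I : O → F → Prop) (B : Set O) : Set F := {x | ∀ a ∈ B, I a x}

/-- `I^{(0)}[Y]` -/
def gdn {O F : Type} (I : O → F → Prop) (Y : Set F) : Set O := {a | ∀ x ∈ Y, I a x}

/-- Galois-stability for sets of objects. -/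
def StableO {O F : Type} (I : O → F → Prop) (B : Set O) : Prop := gdn I (gup I B) = B

/-- Galois-stability for sets of features. -/
def StableF {O F : Type} (I : O → F → Prop) (Y : Set F) : Prop := gup I (gdn I Y) = Y

/-- An interpretation of LE-ALC: an enriched formal context `(Ob, Ft, I, R_□, R_◇)`
together with interpretations of the individual names and of the atomic
concepts (an atomic concept is interpreted by the formal concept whose
extent is `vA n` and whose intent is `gup I (vA n)`). -/
structure Model where
  Ob : Type
  Ft : Type
  I : Ob → Ft → Prop
  Rb : Ob → Ft → Prop
  Rd : Ft → Ob → Prop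
  oi : ObName → Ob
  fi : FtName → Ft
  vA : ℕ → Set Ob

/-- Intent of the interpretation of an atomic concept. -/
def Model.vX (M : Model) (n : ℕ) : Set M.Ft := gup M.I (M.vA n)

/-- Well-formedness of an interpretation: `R_□` and `R_◇` are `I`-compatible,
and atomic concepts are interpreted by formal concepts. -/
def Model.Good (M : Model) : Prop :=
  (∀ x, StableO M.I {a | M.Rb a x}) ∧
  (∀ a, StableF M.I {x | M.Rb a x}) ∧
  (∀ a, StableF M.I {x | M.Rd x a}) ∧
  (∀ x, StableO M.I {a | M.Rd x a}) ∧
  (∀ n, StableO M.I (M.vA n))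

/-- The interpretation `C^M = (extent, intent)` of a concept. -/
def Model.ci (M : Model) : Cpt → Set M.Ob × Set M.Ft
  | .atom n => (M.vA n, M.vX n)
  | .meet C₁ C₂ =>
      ((Model.ci M C₁).1 ∩ (Model.ci M C₂).1,
        gup M.I ((Model.ci M C₁).1 ∩ (Model.ci M C₂).1))
  | .join C₁ C₂ =>
      (gdn M.I ((Model.ci M C₁).2 ∩ (Model.ci M C₂).2),
        (Model.ci M C₁).2 ∩ (Model.ci M C₂).2)
  | .box C =>
      (gdn M.Rb (Model.ci M C).2, gup M.I (gdn M.Rb (Model.ci M C).2))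
  | .dia C =>
      (gdn M.I (gup (fun a x => M.Rd x a) (Model.ci M C).1),
        gup (fun a x => M.Rd x a) (Model.ci M C).1)

/-- Satisfaction of positive ABox terms. -/
def Model.SatP (M : Model) : PTerm → Prop
  | .rI b y => M.I (M.oi b) (M.fi y)
  | .rbox b y => M.Rb (M.oi b) (M.fi y)
  | .rdia y b => M.Rd (M.fi y) (M.oi b)
  | .mem b C => M.oi b ∈ (Model.ci M C).1
  | .fmem y C => M.fi y ∈ (Model.ci M C).2

/-- Satisfaction of ABox terms. -/
def Model.Sat (M : Model) : Term → Prop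
  | .pos t => M.SatP t
  | .neg t => ¬ M.SatP t

/-- `M` is a model of the set of terms `A`. -/
def Model.SatAll (M : Model) (A : Set Term) : Prop := ∀ t ∈ A, M.Sat t

/-- An ABox is consistent iff it has a model. -/
def Consistent (A : Set Term) : Prop := ∃ M : Model, M.Good ∧ M.SatAll A

/-- `A ⊨ t`: every model of `A` satisfies `t`. -/
def Entails (A : Set Term) (t : Term) : Prop :=
  ∀ M : Model, M.Good → M.SatAll A → M.Sat t

/-- `A ⊨ C₁ ⊑ C₂`: in every model of `A`, `C₁^M ≤ C₂^M` in the concept lattice. -/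
def EntailsSub (A : Set Term) (C₁ C₂ : Cpt) : Prop :=
  ∀ M : Model, M.Good → M.SatAll A → (Model.ci M C₁).1 ⊆ (Model.ci M C₂).1

/-! ### Semantic concept operations -/

/-- The operation `[R_□]` on (extent, intent) pairs. -/
def Model.cbox (M : Model) (c : Set M.Ob × Set M.Ft) : Set M.Ob × Set M.Ft :=
  (gdn M.Rb c.2, gup M.I (gdn M.Rb c.2))

/-- The operation `⟨R_◇⟩` on (extent, intent) pairs. -/
def Model.cdia (M : Model) (c : Set M.Ob × Set M.Ft) : Set M.Ob × Set M.Ft :=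
  (gdn M.I (gup (fun a x => M.Rd x a) c.1), gup (fun a x => M.Rd x a) c.1)

/-- The operation `◆` (left adjoint of `[R_□]`). -/
def Model.cbdia (M : Model) (c : Set M.Ob × Set M.Ft) : Set M.Ob × Set M.Ft :=
  (gdn M.I (gup M.Rb c.1), gup M.Rb c.1)

/-- The operation `■` (right adjoint of `⟨R_◇⟩`). -/
def Model.cbbox (M : Model) (c : Set M.Ob × Set M.Ft) : Set M.Ob × Set M.Ft :=
  (gdn (fun a x => M.Rd x a) c.2, gup M.I (gdn (fun a x => M.Rd x a) c.2))

/-- The concept `𝐚 = (a^{↑↓}, a^{↑})` generated by an object. -/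
def Model.genO (M : Model) (a : M.Ob) : Set M.Ob × Set M.Ft :=
  (gdn M.I (gup M.I {a}), gup M.I {a})

/-- The concept `𝐱 = (x^{↓}, x^{↓↑})` generated by a feature. -/
def Model.genF (M : Model) (x : M.Ft) : Set M.Ob × Set M.Ft :=
  (gdn M.I {x}, gup M.I (gdn M.I {x}))

/-- The concept companion `con(b)` of an object name, interpreted in `M`. -/
def Model.conO (M : Model) : ObName → Set M.Ob × Set M.Ft
  | .base n => M.genO (M.oi (.base n))
  | .cls C => M.genO (M.oi (.cls C))
  | .dia b => M.cdia (Model.conO M b)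
  | .bdia b => M.cbdia (Model.conO M b)

/-- The concept companion `con(y)` of a feature name, interpreted in `M`. -/
def Model.conF (M : Model) : FtName → Set M.Ob × Set M.Ft
  | .base n => M.genF (M.fi (.base n))
  | .cls C => M.genF (M.fi (.cls C))
  | .box y => M.cbox (Model.conF M y)
  | .bbox y => M.cbbox (Model.conF M y)

/-! ### The canonical model built from the tableaux completion -/

/-- Classical `dite`. -/
noncomputable def cdite {α : Sort*} (p : Prop) (f : p → α) (g : ¬ p → α) : α :=
  @dite α p (Classical.dec p) f g

/-- The canonical model built from the tableaux completion `Ā` of `A`: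
its objects (resp. features) are the object (resp. feature) names occurring
in `Ā` (plus a dummy point interpreting the names not occurring in `Ā`),
every name occurring in `Ā` is interpreted by itself, the relations are read
off from `Ā`, and an atomic concept `D` is interpreted by the formal concept
`(x_D^↓, a_D^↑)`. -/
noncomputable def canModel (A : Finset Term) : Model where
  Ob := Option {b : ObName // ObOccurs b (Compl noExt ↑A)}
  Ft := Option {y : FtName // FtOccurs y (Compl noExt ↑A)}
  I := fun o x => ∃ b y, o = some b ∧ x = some y ∧
        Term.pos (.rI b.1 y.1) ∈ Compl noExt ↑A
  Rb := fun o x => ∃ b y, o = some b ∧ x = some y ∧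
        Term.pos (.rbox b.1 y.1) ∈ Compl noExt ↑A
  Rd := fun x o => ∃ b y, o = some b ∧ x = some y ∧
        Term.pos (.rdia y.1 b.1) ∈ Compl noExt ↑A
  oi := fun b => cdite (ObOccurs b (Compl noExt ↑A)) (fun h => some ⟨b, h⟩) (fun _ => none)
  fi := fun y => cdite (FtOccurs y (Compl noExt ↑A)) (fun h => some ⟨y, h⟩) (fun _ => none)
  vA := fun n => {o | ∃ b, o = some b ∧
        Term.pos (.rI b.1 (.cls (.atom n))) ∈ Compl noExt ↑A}

/-! ### ◇-leading and □-leading concepts -/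

/-- ◇-leading concepts. -/
inductive DiaLeading : Cpt → Prop
  | atom (n : ℕ) : DiaLeading (.dia (.atom n))
  | dia {C : Cpt} : DiaLeading C → DiaLeading (.dia C)
  | join {C : Cpt} (C₁ : Cpt) : DiaLeading C → DiaLeading (.join C C₁)
  | meet {C₁ C₂ : Cpt} : DiaLeading C₁ → DiaLeading C₂ → DiaLeading (.meet C₁ C₂)

/-- □-leading concepts. -/
inductive BoxLeading : Cpt → Prop
  | atom (n : ℕ) : BoxLeading (.box (.atom n))
  | box {C : Cpt} : BoxLeading C → BoxLeading (.box C)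
  | meet {C : Cpt} (C₁ : Cpt) : BoxLeading C → BoxLeading (.meet C C₁)
  | join {C₁ C₂ : Cpt} : BoxLeading C₁ → BoxLeading C₂ → BoxLeading (.join C₁ C₂)

/-! ### Auxiliary Galois-connection lemmas -/

section GaloisAux
variable {O F : Type} {T I : O → F → Prop}

lemma gup_anti {B B' : Set O} (h : B ⊆ B') : gup I B' ⊆ gup I B :=
  fun _ hx a ha => hx a (h ha)

lemma gdn_anti {Y Y' : Set F} (h : Y ⊆ Y') : gdn I Y' ⊆ gdn I Y :=
  fun _ ha x hx => ha x (h hx)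

lemma subset_gdn_gup (B : Set O) : B ⊆ gdn I (gup I B) :=
  fun a ha x hx => hx a ha

lemma subset_gup_gdn (Y : Set F) : Y ⊆ gup I (gdn I Y) :=
  fun x hx a ha => ha x hx

lemma stableO_gdn (Y : Set F) : StableO I (gdn I Y) :=
  Set.Subset.antisymm (gdn_anti (subset_gup_gdn Y)) (subset_gdn_gup _)

lemma stableF_gup (B : Set O) : StableF I (gup I B) :=
  Set.Subset.antisymm (gup_anti (subset_gdn_gup B)) (subset_gup_gdn _)

lemma gdngup_subset_iff {B S : Set O} (hS : StableO I S) :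
    gdn I (gup I B) ⊆ S ↔ B ⊆ S := by
  constructor
  · intro h
    exact (subset_gdn_gup B).trans h
  · intro h
    have h2 := gdn_anti (I := I) (gup_anti (I := I) h)
    rwa [hS] at h2

lemma gupgdn_subset_iff {Y S : Set F} (hS : StableF I S) :
    gup I (gdn I Y) ⊆ S ↔ Y ⊆ S := by
  constructor
  · intro h
    exact (subset_gup_gdn Y).trans h
  · intro h
    have h2 := gup_anti (I := I) (gdn_anti (I := I) h)
    rwa [hS] at h2

lemma subset_gdn_iff {B : Set O} {Y : Set F} :
    B ⊆ gdn T Y ↔ Y ⊆ gup T B :=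
  ⟨fun h x hx a ha => h ha x hx, fun h a ha x hx => h hx a ha⟩

lemma stableO_iInter {ι : Sort*} {S : ι → Set O} (h : ∀ i, StableO I (S i)) :
    StableO I {a | ∀ i, a ∈ S i} := by
  have hset : {a | ∀ i, a ∈ S i} = gdn I {x | ∃ i, x ∈ gup I (S i)} := by
    ext a
    constructor
    · rintro ha x ⟨i, hx⟩
      exact hx a (ha i)
    · intro ha i
      rw [← h i]
      exact fun x hx => ha x ⟨i, hx⟩
  rw [hset]
  exact stableO_gdn _

lemma stableF_iInter {ι : Sort*} {S : ι → Set F} (h : ∀ i, StableF I (S i)) :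
    StableF I {x | ∀ i, x ∈ S i} := by
  have hset : {x | ∀ i, x ∈ S i} = gup I {a | ∃ i, a ∈ gdn I (S i)} := by
    ext x
    constructor
    · rintro hx a ⟨i, ha⟩
      exact ha x (hx i)
    · intro hx i
      rw [← h i]
      exact fun a ha => hx a ⟨i, ha⟩
  rw [hset]
  exact stableF_gup _

lemma stableO_inter {B₁ B₂ : Set O} (h₁ : StableO I B₁) (h₂ : StableO I B₂) :
    StableO I (B₁ ∩ B₂) := by
  have h := stableO_iInter (I := I) (S := fun b : Bool => if b then B₁ else B₂)
    (by rintro (_ | _) <;> simpa)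
  have e : {a | ∀ b : Bool, a ∈ if b then B₁ else B₂} = B₁ ∩ B₂ := by
    ext a
    simp [Bool.forall_bool, and_comm]
  rwa [e] at h

lemma stableF_inter {Y₁ Y₂ : Set F} (h₁ : StableF I Y₁) (h₂ : StableF I Y₂) :
    StableF I (Y₁ ∩ Y₂) := by
  have h := stableF_iInter (I := I) (S := fun b : Bool => if b then Y₁ else Y₂)
    (by rintro (_ | _) <;> simpa)
  have e : {x | ∀ b : Bool, x ∈ if b then Y₁ else Y₂} = Y₁ ∩ Y₂ := by
    ext x
    simp [Bool.forall_bool, and_comm]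
  rwa [e] at h

end GaloisAux

/-! ### Stability consequences of `Model.Good` -/

lemma stableO_gdnRb (M : Model) (hG : M.Good) (Y : Set M.Ft) :
    StableO M.I (gdn M.Rb Y) := by
  have h := stableO_iInter (I := M.I) (S := fun x : Y => {a | M.Rb a x.1})
    (fun x => hG.1 x.1)
  have e : {a | ∀ i : Y, a ∈ {a' | M.Rb a' i.1}} = gdn M.Rb Y := by
    ext a
    simp [gdn, Subtype.forall]
  rwa [e] at h

lemma stableF_gupRb (M : Model) (hG : M.Good) (B : Set M.Ob) :
    StableF M.I (gup M.Rb B) := by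
  have h := stableF_iInter (I := M.I) (S := fun b : B => {x | M.Rb b.1 x})
    (fun b => hG.2.1 b.1)
  have e : {x | ∀ i : B, x ∈ {x' | M.Rb i.1 x'}} = gup M.Rb B := by
    ext x
    simp [gup, Subtype.forall]
  rwa [e] at h

lemma stableF_gupRdT (M : Model) (hG : M.Good) (B : Set M.Ob) :
    StableF M.I (gup (fun a x => M.Rd x a) B) := by
  have h := stableF_iInter (I := M.I) (S := fun b : B => {x | M.Rd x b.1})
    (fun b => hG.2.2.1 b.1)
  have e : {x | ∀ i : B, x ∈ {x' | M.Rd x' i.1}} = gup (fun a x => M.Rd x a) B := by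
    ext x
    simp [gup, Subtype.forall]
  rwa [e] at h

lemma stableO_gdnRdT (M : Model) (hG : M.Good) (Y : Set M.Ft) :
    StableO M.I {a | ∀ x ∈ Y, M.Rd x a} := by
  have h := stableO_iInter (I := M.I) (S := fun x : Y => {a | M.Rd x.1 a})
    (fun x => hG.2.2.2.1 x.1)
  have e : {a | ∀ i : Y, a ∈ {a' | M.Rd i.1 a'}} = {a | ∀ x ∈ Y, M.Rd x a} := by
    ext a
    simp [Subtype.forall]
  rwa [e] at h

lemma ci_good (M : Model) (hG : M.Good) :
    ∀ C : Cpt, StableO M.I (Model.ci M C).1 ∧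
      (Model.ci M C).2 = gup M.I (Model.ci M C).1 := by
  intro C
  induction C with
  | atom n => exact ⟨hG.2.2.2.2 n, rfl⟩
  | meet C₁ C₂ ih₁ ih₂ => exact ⟨stableO_inter ih₁.1 ih₂.1, rfl⟩
  | join C₁ C₂ ih₁ ih₂ =>
      have hs : StableF M.I ((Model.ci M C₁).2 ∩ (Model.ci M C₂).2) :=
        stableF_inter (by rw [ih₁.2]; exact stableF_gup _)
          (by rw [ih₂.2]; exact stableF_gup _)
      exact ⟨stableO_gdn _, hs.symm⟩
  | box C ih => exact ⟨stableO_gdnRb M hG _, rfl⟩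
  | dia C ih => exact ⟨stableO_gdn _, (stableF_gupRdT M hG _).symm⟩

/-! ### The extended model -/

/-- Extent companion of the new objects: old objects and stable sets. -/
def gext (M : Model) : M.Ob ⊕ {B : Set M.Ob // StableO M.I B} → Set M.Ob
  | .inl a => gdn M.I (gup M.I {a})
  | .inr c => c.1

/-- Extent companion of the new features: old features and stable sets. -/
def mext (M : Model) : M.Ft ⊕ {B : Set M.Ob // StableO M.I B} → Set M.Ob
  | .inl x => gdn M.I {x}
  | .inr c => c.1

/-- The extension of `M` obtained by freely adjoining a copy of the concept
lattice of `M` (represented by Galois-stable sets of objects) to both the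
objects and the features. -/
def extModel (M : Model) : Model where
  Ob := M.Ob ⊕ {B : Set M.Ob // StableO M.I B}
  Ft := M.Ft ⊕ {B : Set M.Ob // StableO M.I B}
  I := fun o f => gext M o ⊆ mext M f
  Rb := fun o f => gext M o ⊆ gdn M.Rb (gup M.I (mext M f))
  Rd := fun f o => gup M.I (mext M f) ⊆ gup (fun a x => M.Rd x a) (gext M o)
  oi := fun b => Sum.inl (M.oi b)
  fi := fun y => Sum.inl (M.fi y)
  vA := fun n => {o | gext M o ⊆ M.vA n}

lemma gext_stable (M : Model) (o : (extModel M).Ob) : StableO M.I (gext M o) := by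
  cases o with
  | inl a => exact stableO_gdn _
  | inr c => exact c.2

lemma mext_stable (M : Model) (f : (extModel M).Ft) : StableO M.I (mext M f) := by
  cases f with
  | inl x => exact stableO_gdn _
  | inr c => exact c.2

/-- Objects of the extension below a stable set. -/
def Oset (M : Model) (B : Set M.Ob) : Set (extModel M).Ob := {o | gext M o ⊆ B}

/-- Features of the extension above a stable set. -/
def Fset (M : Model) (B : Set M.Ob) : Set (extModel M).Ft := {f | B ⊆ mext M f}

lemma gup_Oset (M : Model) {B : Set M.Ob} (hB : StableO M.I B) :
    gup (extModel M).I (Oset M B) = Fset M B := by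
  ext f
  constructor
  · intro h
    exact h (Sum.inr ⟨B, hB⟩) (fun a ha => ha)
  · intro h o ho
    exact Set.Subset.trans ho h

lemma gdn_Fset (M : Model) {B : Set M.Ob} (hB : StableO M.I B) :
    gdn (extModel M).I (Fset M B) = Oset M B := by
  ext o
  constructor
  · intro h
    exact h (Sum.inr ⟨B, hB⟩) (fun a ha => ha)
  · intro h f hf
    exact Set.Subset.trans h hf

lemma stableO_Oset (M : Model) {B : Set M.Ob} (hB : StableO M.I B) :
    StableO (extModel M).I (Oset M B) := by
  unfold StableO
  rw [gup_Oset M hB, gdn_Fset M hB]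

lemma stableF_Fset (M : Model) {B : Set M.Ob} (hB : StableO M.I B) :
    StableF (extModel M).I (Fset M B) := by
  unfold StableF
  rw [gdn_Fset M hB, gup_Oset M hB]

lemma mint_subset_iff (M : Model) {S : Set M.Ft} (hS : StableF M.I S)
    (f : (extModel M).Ft) :
    gup M.I (mext M f) ⊆ S ↔ gdn M.I S ⊆ mext M f := by
  constructor
  · intro h
    have h2 := gdn_anti (I := M.I) h
    rwa [mext_stable M f] at h2
  · intro h
    have h2 := gup_anti (I := M.I) h
    rwa [hS] at h2

lemma ci_ext (M : Model) (hG : M.Good) :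
    ∀ C : Cpt, (Model.ci (extModel M) C).1 = Oset M (Model.ci M C).1 ∧
      (Model.ci (extModel M) C).2 = Fset M (Model.ci M C).1 := by
  intro C
  induction C with
  | atom n =>
      exact ⟨rfl, gup_Oset M (hG.2.2.2.2 n)⟩
  | meet C₁ C₂ ih₁ ih₂ =>
      have h1 : (Model.ci (extModel M) (Cpt.meet C₁ C₂)).1
          = Oset M (Model.ci M (Cpt.meet C₁ C₂)).1 := by
        show (Model.ci (extModel M) C₁).1 ∩ (Model.ci (extModel M) C₂).1 = _
        rw [ih₁.1, ih₂.1]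
        ext o
        exact Set.subset_inter_iff.symm
      refine ⟨h1, ?_⟩
      show gup (extModel M).I
          ((Model.ci (extModel M) C₁).1 ∩ (Model.ci (extModel M) C₂).1) = _
      have h1' : (Model.ci (extModel M) C₁).1 ∩ (Model.ci (extModel M) C₂).1
          = Oset M (Model.ci M (Cpt.meet C₁ C₂)).1 := h1
      rw [h1']
      exact gup_Oset M (ci_good M hG (Cpt.meet C₁ C₂)).1
  | join C₁ C₂ ih₁ ih₂ =>
      have hB₁ := (ci_good M hG C₁).1
      have hB₂ := (ci_good M hG C₂).1
      have hY₁ := (ci_good M hG C₁).2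
      have hY₂ := (ci_good M hG C₂).2
      have h2 : (Model.ci (extModel M) (Cpt.join C₁ C₂)).2
          = Fset M (Model.ci M (Cpt.join C₁ C₂)).1 := by
        show (Model.ci (extModel M) C₁).2 ∩ (Model.ci (extModel M) C₂).2 = _
        rw [ih₁.2, ih₂.2]
        ext f
        constructor
        · rintro ⟨hf₁, hf₂⟩
          intro a ha
          rw [← mext_stable M f]
          intro x hx
          have hx₁ : x ∈ (Model.ci M C₁).2 := by
            rw [hY₁]; exact gup_anti hf₁ hx
          have hx₂ : x ∈ (Model.ci M C₂).2 := by
            rw [hY₂]; exact gup_anti hf₂ hx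
          exact ha x ⟨hx₁, hx₂⟩
        · intro hf
          constructor
          · intro a ha
            refine hf ?_
            rw [← hB₁] at ha
            exact fun x hx => ha x (hY₁ ▸ hx.1)
          · intro a ha
            refine hf ?_
            rw [← hB₂] at ha
            exact fun x hx => ha x (hY₂ ▸ hx.2)
      refine ⟨?_, h2⟩
      show gdn (extModel M).I
          ((Model.ci (extModel M) C₁).2 ∩ (Model.ci (extModel M) C₂).2) = _
      have h2' : (Model.ci (extModel M) C₁).2 ∩ (Model.ci (extModel M) C₂).2
          = Fset M (Model.ci M (Cpt.join C₁ C₂)).1 := h2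
      rw [h2']
      exact gdn_Fset M (ci_good M hG (Cpt.join C₁ C₂)).1
  | box C ih =>
      have hB := (ci_good M hG C).1
      have hY := (ci_good M hG C).2
      have h1 : (Model.ci (extModel M) (Cpt.box C)).1
          = Oset M (Model.ci M (Cpt.box C)).1 := by
        show gdn (extModel M).Rb (Model.ci (extModel M) C).2 = _
        rw [ih.2]
        ext o
        constructor
        · intro h
          have h0 := h (Sum.inr ⟨(Model.ci M C).1, hB⟩) (fun a ha => ha)
          show gext M o ⊆ gdn M.Rb (Model.ci M C).2
          rw [hY]
          exact h0
        · intro h f hf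
          show gext M o ⊆ gdn M.Rb (gup M.I (mext M f))
          refine Set.Subset.trans h ?_
          refine gdn_anti ?_
          rw [hY]
          exact gup_anti hf
      refine ⟨h1, ?_⟩
      show gup (extModel M).I (gdn (extModel M).Rb (Model.ci (extModel M) C).2) = _
      have h1' : gdn (extModel M).Rb (Model.ci (extModel M) C).2
          = Oset M (Model.ci M (Cpt.box C)).1 := h1
      rw [h1']
      exact gup_Oset M (ci_good M hG (Cpt.box C)).1
  | dia C ih =>
      have hB := (ci_good M hG C).1
      have hSt : StableF M.I (gup (fun a x => M.Rd x a) (Model.ci M C).1) :=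
        stableF_gupRdT M hG _
      have h2 : (Model.ci (extModel M) (Cpt.dia C)).2
          = Fset M (Model.ci M (Cpt.dia C)).1 := by
        show gup (fun o f => (extModel M).Rd f o) (Model.ci (extModel M) C).1 = _
        rw [ih.1]
        ext f
        constructor
        · intro h
          have h0 := h (Sum.inr ⟨(Model.ci M C).1, hB⟩) (fun a ha => ha)
          exact (mint_subset_iff M hSt f).1 h0
        · intro h o ho
          show gup M.I (mext M f) ⊆ gup (fun a x => M.Rd x a) (gext M o)
          refine Set.Subset.trans ((mint_subset_iff M hSt f).2 h) ?_
          exact gup_anti ho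
      refine ⟨?_, h2⟩
      show gdn (extModel M).I
          (gup (fun o f => (extModel M).Rd f o) (Model.ci (extModel M) C).1) = _
      have h2' : gup (fun o f => (extModel M).Rd f o) (Model.ci (extModel M) C).1
          = Fset M (Model.ci M (Cpt.dia C)).1 := h2
      rw [h2']
      exact gdn_Fset M (ci_good M hG (Cpt.dia C)).1

lemma extModel_good (M : Model) (hG : M.Good) : (extModel M).Good := by
  refine ⟨?_, ?_, ?_, ?_, ?_⟩
  · intro f
    exact stableO_Oset M (stableO_gdnRb M hG (gup M.I (mext M f)))
  · intro o
    have e : {f | (extModel M).Rb o f}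
        = Fset M (gdn M.I (gup M.Rb (gext M o))) := by
      ext f
      show gext M o ⊆ gdn M.Rb (gup M.I (mext M f)) ↔ _
      rw [subset_gdn_iff]
      exact mint_subset_iff M (stableF_gupRb M hG _) f
    rw [e]
    exact stableF_Fset M (stableO_gdn _)
  · intro o
    have e : {f | (extModel M).Rd f o}
        = Fset M (gdn M.I (gup (fun a x => M.Rd x a) (gext M o))) := by
      ext f
      exact mint_subset_iff M (stableF_gupRdT M hG _) f
    rw [e]
    exact stableF_Fset M (stableO_gdn _)
  · intro f
    have e : {o | (extModel M).Rd f o}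
        = Oset M {a | ∀ x ∈ gup M.I (mext M f), M.Rd x a} := by
      ext o
      show gup M.I (mext M f) ⊆ gup (fun a x => M.Rd x a) (gext M o) ↔
        gext M o ⊆ _
      constructor
      · intro h a ha x hx
        exact h hx a ha
      · intro h x hx a ha
        exact h ha x hx
    rw [e]
    exact stableO_Oset M (stableO_gdnRdT M hG _)
  · intro n
    exact stableO_Oset M (hG.2.2.2.2 n)

lemma ext_I_iff (M : Model) (a : M.Ob) (x : M.Ft) :
    (extModel M).I (Sum.inl a) (Sum.inl x) ↔ M.I a x := by
  show gdn M.I (gup M.I {a}) ⊆ gdn M.I {x} ↔ _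
  rw [gdngup_subset_iff (stableO_gdn _)]
  constructor
  · intro h
    exact h rfl x rfl
  · intro h a' ha'
    cases ha'
    intro x' hx'
    cases hx'
    exact h

lemma ext_Rb_iff (M : Model) (hG : M.Good) (a : M.Ob) (x : M.Ft) :
    (extModel M).Rb (Sum.inl a) (Sum.inl x) ↔ M.Rb a x := by
  show gdn M.I (gup M.I {a}) ⊆ gdn M.Rb (gup M.I (gdn M.I {x})) ↔ _
  rw [gdngup_subset_iff (stableO_gdnRb M hG _), Set.singleton_subset_iff]
  show gup M.I (gdn M.I {x}) ⊆ {x' | M.Rb a x'} ↔ _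
  rw [gupgdn_subset_iff (hG.2.1 a)]
  exact Set.singleton_subset_iff

lemma ext_Rd_iff (M : Model) (hG : M.Good) (x : M.Ft) (a : M.Ob) :
    (extModel M).Rd (Sum.inl x) (Sum.inl a) ↔ M.Rd x a := by
  show gup M.I (gdn M.I {x}) ⊆
    gup (fun a' x' => M.Rd x' a') (gdn M.I (gup M.I {a})) ↔ _
  have e : gup (fun a' x' => M.Rd x' a') (gdn M.I (gup M.I {a}))
      = {x' | M.Rd x' a} := by
    ext x'
    show (∀ a' ∈ gdn M.I (gup M.I {a}), M.Rd x' a') ↔ _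
    constructor
    · intro h
      exact h a (subset_gdn_gup {a} rfl)
    · intro h a' ha'
      have h2 : ({a} : Set M.Ob) ⊆ {a'' | M.Rd x' a''} :=
        Set.singleton_subset_iff.2 h
      exact (gdngup_subset_iff (hG.2.2.2.1 x')).2 h2 ha'
  rw [e, gupgdn_subset_iff (hG.2.2.1 a)]
  exact Set.singleton_subset_iff

lemma ext_sat_iff (M : Model) (hG : M.Good) (t : Term) :
    (extModel M).Sat t ↔ M.Sat t := by
  have hp : ∀ p : PTerm, (extModel M).SatP p ↔ M.SatP p := by
    intro p
    cases p with
    | rI b y => exact ext_I_iff M (M.oi b) (M.fi y)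
    | rbox b y => exact ext_Rb_iff M hG (M.oi b) (M.fi y)
    | rdia y b => exact ext_Rd_iff M hG (M.fi y) (M.oi b)
    | mem b C =>
        show Sum.inl (M.oi b) ∈ (Model.ci (extModel M) C).1 ↔
          M.oi b ∈ (Model.ci M C).1
        rw [(ci_ext M hG C).1]
        show gdn M.I (gup M.I {M.oi b}) ⊆ (Model.ci M C).1 ↔ _
        rw [gdngup_subset_iff (ci_good M hG C).1]
        exact Set.singleton_subset_iff
    | fmem y C =>
        show Sum.inl (M.fi y) ∈ (Model.ci (extModel M) C).2 ↔
          M.fi y ∈ (Model.ci M C).2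
        rw [(ci_ext M hG C).2, (ci_good M hG C).2]
        show (Model.ci M C).1 ⊆ gdn M.I {M.fi y} ↔ _
        constructor
        · intro h a ha
          exact h ha (M.fi y) rfl
        · intro h a ha x hx
          cases hx
          exact h a ha
  cases t with
  | pos p => exact hp p
  | neg p => exact not_congr (hp p)

/-- For any LE-ALC ABox `A`, any model `M` of `A` can be
extended to a model `M'` (over enlarged domains, witnessed by injections
`ι`, `κ` preserving the relations and the interpretations of the names)
such that:
(1) for every concept `C` there exist `a_C` and `x_C` with
    `C^{M'} = (I'^{(0)}[x_C], I'^{(1)}[a_C])`, `a_C` in the extent of `C^{M'}`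
    and `x_C` in the intent of `C^{M'}`;
(2) for every individual `b` of `M` there exist `◇b` and `◆b` in `M'` with
    `I'^{(1)}[◆b] = R_□'^{(1)}[b]` and `I'^{(1)}[◇b] = R_◇'^{(0)}[b]`;
(3) for every individual `y` of `M` there exist `□y` and `■y` in `M'` with
    `I'^{(0)}[■y] = R_◇'^{(1)}[y]` and `I'^{(0)}[□y] = R_□'^{(0)}[y]`;
(4) for any concept `C`, the extent (resp. intent) of `C^M` is the restriction
    of the extent (resp. intent) of `C^{M'}` to the old domain. -/
theorem model_extension (A : Finset Term) (hwf : ABoxWF ↑A)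
    (M : Model) (hG : M.Good) (hM : M.SatAll ↑A) :
    ∃ (M' : Model) (ι : M.Ob → M'.Ob) (κ : M.Ft → M'.Ft),
      M'.Good ∧ M'.SatAll ↑A ∧
      Function.Injective ι ∧ Function.Injective κ ∧
      (∀ a x, M'.I (ι a) (κ x) ↔ M.I a x) ∧
      (∀ a x, M'.Rb (ι a) (κ x) ↔ M.Rb a x) ∧
      (∀ x a, M'.Rd (κ x) (ι a) ↔ M.Rd x a) ∧
      M'.oi = ι ∘ M.oi ∧ M'.fi = κ ∘ M.fi ∧
      (∀ C : Cpt, ∃ (aC : M'.Ob) (xC : M'.Ft),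
        (Model.ci M' C).1 = gdn M'.I {xC} ∧
        (Model.ci M' C).2 = gup M'.I {aC} ∧
        aC ∈ (Model.ci M' C).1 ∧ xC ∈ (Model.ci M' C).2) ∧
      (∀ b : M.Ob, ∃ diaB bdiaB : M'.Ob,
        gup M'.I {bdiaB} = {x | M'.Rb (ι b) x} ∧
        gup M'.I {diaB} = {x | M'.Rd x (ι b)}) ∧
      (∀ y : M.Ft, ∃ boxY bboxY : M'.Ft,
        gdn M'.I {bboxY} = {a | M'.Rd (κ y) a} ∧
        gdn M'.I {boxY} = {a | M'.Rb a (κ y)}) ∧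
      (∀ C : Cpt,
        ι '' (Model.ci M C).1 = (Model.ci M' C).1 ∩ Set.range ι ∧
        κ '' (Model.ci M C).2 = (Model.ci M' C).2 ∩ Set.range κ) := by
  refine ⟨extModel M, Sum.inl, Sum.inl, extModel_good M hG,
    fun t ht => (ext_sat_iff M hG t).mpr (hM t ht),
    Sum.inl_injective, Sum.inl_injective,
    fun a x => ext_I_iff M a x,
    fun a x => ext_Rb_iff M hG a x,
    fun x a => ext_Rd_iff M hG x a,
    rfl, rfl, ?_, ?_, ?_, ?_⟩
  · -- (1): classifying object and feature for every concept
    intro C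
    have hB := (ci_good M hG C).1
    refine ⟨Sum.inr ⟨(Model.ci M C).1, hB⟩, Sum.inr ⟨(Model.ci M C).1, hB⟩,
      ?_, ?_, ?_, ?_⟩
    · rw [(ci_ext M hG C).1]
      ext o
      constructor
      · intro h f hf
        cases hf
        exact h
      · intro h
        exact h _ rfl
    · rw [(ci_ext M hG C).2]
      ext f
      constructor
      · intro h o ho
        cases ho
        exact h
      · intro h
        exact h _ rfl
    · rw [(ci_ext M hG C).1]
      exact fun a ha => ha
    · rw [(ci_ext M hG C).2]
      exact fun a ha => ha
  · -- (2): `◇b` and `◆b`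
    intro b
    refine ⟨Sum.inr ⟨gdn M.I (gup (fun a x => M.Rd x a) (gext M (Sum.inl b))),
        stableO_gdn _⟩,
      Sum.inr ⟨gdn M.I (gup M.Rb (gext M (Sum.inl b))), stableO_gdn _⟩, ?_, ?_⟩
    · ext f
      have h1 : f ∈ gup (extModel M).I
          {Sum.inr ⟨gdn M.I (gup M.Rb (gext M (Sum.inl b))), stableO_gdn _⟩} ↔
          gdn M.I (gup M.Rb (gext M (Sum.inl b))) ⊆ mext M f := by
        constructor
        · intro h
          exact h _ rfl
        · intro h o ho
          cases ho
          exact h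
      refine h1.trans ?_
      show _ ↔ (extModel M).Rb (Sum.inl b) f
      rw [← mint_subset_iff M (stableF_gupRb M hG _) f]
      show _ ↔ gext M (Sum.inl b) ⊆ gdn M.Rb (gup M.I (mext M f))
      rw [subset_gdn_iff]
    · ext f
      have h1 : f ∈ gup (extModel M).I
          {Sum.inr ⟨gdn M.I (gup (fun a x => M.Rd x a) (gext M (Sum.inl b))),
            stableO_gdn _⟩} ↔
          gdn M.I (gup (fun a x => M.Rd x a) (gext M (Sum.inl b))) ⊆ mext M f := by
        constructor
        · intro h
          exact h _ rfl
        · intro h o ho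
          cases ho
          exact h
      refine h1.trans ?_
      show _ ↔ (extModel M).Rd f (Sum.inl b)
      rw [← mint_subset_iff M (stableF_gupRdT M hG _) f]
      exact Iff.rfl
  · -- (3): `□y` and `■y`
    intro y
    refine ⟨Sum.inr ⟨gdn M.Rb (gup M.I (mext M (Sum.inl y))), stableO_gdnRb M hG _⟩,
      Sum.inr ⟨{a | ∀ x ∈ gup M.I (mext M (Sum.inl y)), M.Rd x a},
        stableO_gdnRdT M hG _⟩, ?_, ?_⟩
    · ext o
      have h1 : o ∈ gdn (extModel M).I
          {Sum.inr ⟨{a | ∀ x ∈ gup M.I (mext M (Sum.inl y)), M.Rd x a},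
            stableO_gdnRdT M hG _⟩} ↔
          gext M o ⊆ {a | ∀ x ∈ gup M.I (mext M (Sum.inl y)), M.Rd x a} := by
        constructor
        · intro h
          exact h _ rfl
        · intro h f hf
          cases hf
          exact h
      refine h1.trans ?_
      show _ ↔ (extModel M).Rd (Sum.inl y) o
      show _ ↔ gup M.I (mext M (Sum.inl y)) ⊆ gup (fun a x => M.Rd x a) (gext M o)
      constructor
      · intro h x hx a ha
        exact h ha x hx
      · intro h a ha x hx
        exact h hx a ha
    · ext o
      have h1 : o ∈ gdn (extModel M).I
          {Sum.inr ⟨gdn M.Rb (gup M.I (mext M (Sum.inl y))), stableO_gdnRb M hG _⟩}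
          ↔ gext M o ⊆ gdn M.Rb (gup M.I (mext M (Sum.inl y))) := by
        constructor
        · intro h
          exact h _ rfl
        · intro h f hf
          cases hf
          exact h
      refine h1.trans ?_
      exact Iff.rfl
  · -- (4): conservativity of extents and intents
    intro C
    have hB := (ci_good M hG C).1
    constructor
    · rw [(ci_ext M hG C).1]
      ext o
      constructor
      · rintro ⟨a, ha, rfl⟩
        refine ⟨?_, a, rfl⟩
        show gdn M.I (gup M.I {a}) ⊆ (Model.ci M C).1
        rw [gdngup_subset_iff hB]
        exact Set.singleton_subset_iff.2 ha
      · rintro ⟨ho, a, rfl⟩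
        refine ⟨a, ?_, rfl⟩
        have ho' : gdn M.I (gup M.I {a}) ⊆ (Model.ci M C).1 := ho
        rw [gdngup_subset_iff hB] at ho'
        exact ho' rfl
    · rw [(ci_ext M hG C).2, (ci_good M hG C).2]
      ext f
      constructor
      · rintro ⟨x, hx, rfl⟩
        refine ⟨?_, x, rfl⟩
        show (Model.ci M C).1 ⊆ gdn M.I {x}
        intro a ha x' hx'
        cases hx'
        exact hx a ha
      · rintro ⟨hf, x, rfl⟩
        refine ⟨x, ?_, rfl⟩
        intro a ha
        have hf' : (Model.ci M C).1 ⊆ gdn M.I {x} := hf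
        exact hf' ha x rfl

end LEALC
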